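/- Let k be a field of characteristic zero and let A = A₀ ⊕ A₁ be a simple graded involutive algebra over k with involution τ. Then the subalgebra A₀, with the restricted involution τ|_{A₀}, is a simple involutive algebra: A₀ ≠ 0 and every ideal I₀ of A₀ with τ(I₀) = I₀ equals 0 or A₀. -/

import Mathlib

/-!
The lemma of Section 2.3 of the paper: the degree-zero part `A₀` of a simple
graded involutive algebra `A`, with the restricted involution, is a simple
involutive algebra: `A₀ ≠ 0` and its only τ-stable ideals are `0` and `A₀`.
(Ideals of `A₀` are represented as `k`-subspaces `I₀ ⊆ A₀` closed under
multiplication by elements of `A₀`.)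
-/

/-- A (ℤ/2ℤ-)graded algebra over `k`. -/
structure GradedAlgebraStruct (k A : Type*) [CommSemiring k] [CommRing A] [Algebra k A] where
  deg : ZMod 2 → Submodule k A
  one_mem : (1 : A) ∈ deg 0
  mul_mem : ∀ i j : ZMod 2, ∀ a ∈ deg i, ∀ b ∈ deg j, a * b ∈ deg (i + j)
  isCompl_deg : IsCompl (deg 0) (deg 1)

/-- A graded involutive algebra over `k`: a graded algebra with an involutive
`k`-algebra automorphism preserving the grading. -/
structure GradedInvAlgebraStruct (k A : Type*) [CommSemiring k] [CommRing A] [Algebra k A]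
    extends GradedAlgebraStruct k A where
  τ : A ≃ₐ[k] A
  τ_invol : ∀ a : A, τ (τ a) = a
  τ_deg : ∀ i : ZMod 2, ∀ a ∈ deg i, τ a ∈ deg i

/-- An ideal `I` of `A` is graded if each element of `I` decomposes as a sum of its
even and odd components, both lying in `I`. -/
def GradedAlgebraStruct.IsGradedIdeal {k A : Type*} [CommSemiring k] [CommRing A] [Algebra k A]
    (G : GradedAlgebraStruct k A) (I : Ideal A) : Prop :=
  ∀ x ∈ I, ∃ x₀ ∈ G.deg 0, ∃ x₁ ∈ G.deg 1, x₀ ∈ I ∧ x₁ ∈ I ∧ x = x₀ + x₁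

/-- A graded involutive algebra is simple if it is non-zero and its only
τ-stable graded ideals are `0` and `A`. -/
def GradedInvAlgebraStruct.IsSimple {k A : Type*} [CommSemiring k] [CommRing A] [Algebra k A]
    (G : GradedInvAlgebraStruct k A) : Prop :=
  Nontrivial A ∧ ∀ I : Ideal A, G.toGradedAlgebraStruct.IsGradedIdeal I →
    (∀ x : A, x ∈ I ↔ G.τ x ∈ I) → I = ⊥ ∨ I = ⊤

theorem degree_zero_part_of_simple_gradedInvAlgebra_is_simple
    {k A : Type*} [Field k] [CharZero k]
    [CommRing A] [Algebra k A] [FiniteDimensional k A] [IsSemisimpleRing A]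
    (G : GradedInvAlgebraStruct k A) (hs : G.IsSimple) :
    G.deg 0 ≠ ⊥ ∧
    ∀ I₀ : Submodule k A, I₀ ≤ G.deg 0 →
      (∀ a ∈ G.deg 0, ∀ x ∈ I₀, a * x ∈ I₀) →
      (∀ x : A, x ∈ I₀ ↔ G.τ x ∈ I₀) →
      I₀ = ⊥ ∨ I₀ = G.deg 0 := by
  obtain ⟨hnt, hsimp⟩ := hs
  constructor
  · intro h
    have h1 : (1:A) ∈ G.deg 0 := G.one_mem
    rw [h] at h1
    simp only [Submodule.mem_bot] at h1
    exact one_ne_zero h1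
  · intro I₀ hle hmul hτ
    set M : Submodule k A :=
      Submodule.span k {y | ∃ a ∈ G.deg 1, ∃ x ∈ I₀, y = a * x} with hMdef
    have hMD1 : M ≤ G.deg 1 := by
      rw [hMdef, Submodule.span_le]
      rintro y ⟨a, ha, x, hx, rfl⟩
      have := G.mul_mem 1 0 a ha x (hle hx)
      simpa using this
    set K := I₀ ⊔ M with hKdef
    have hI₀K : I₀ ≤ K := le_sup_left
    have hMK : M ≤ K := le_sup_right
    -- multiplication by deg 0 elements preserves M
    have hmul0M : ∀ a ∈ G.deg 0, ∀ y ∈ M, a * y ∈ M := by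
      intro a ha y hy
      induction hy using Submodule.span_induction with
      | mem z hz =>
        obtain ⟨b, hb, x, hx, rfl⟩ := hz
        rw [← mul_assoc]
        refine Submodule.subset_span ⟨a * b, ?_, x, hx, rfl⟩
        have := G.mul_mem 0 1 a ha b hb
        simpa using this
      | zero => simp
      | add z w _ _ hz hw => rw [mul_add]; exact M.add_mem hz hw
      | smul c z _ hz => rw [mul_smul_comm]; exact M.smul_mem c hz
    -- multiplication by deg 1 elements sends M into I₀
    have hmul1M : ∀ a ∈ G.deg 1, ∀ y ∈ M, a * y ∈ I₀ := by
      intro a ha y hy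
      induction hy using Submodule.span_induction with
      | mem z hz =>
        obtain ⟨b, hb, x, hx, rfl⟩ := hz
        rw [← mul_assoc]
        refine hmul (a * b) ?_ x hx
        have := G.mul_mem 1 1 a ha b hb
        rwa [show (1 : ZMod 2) + 1 = 0 from by decide] at this
      | zero => simp
      | add z w _ _ hz hw => rw [mul_add]; exact I₀.add_mem hz hw
      | smul c z _ hz => rw [mul_smul_comm]; exact I₀.smul_mem c hz
    have hmul0K : ∀ a ∈ G.deg 0, ∀ y ∈ K, a * y ∈ K := by
      intro a ha y hy
      obtain ⟨y1, hy1, y2, hy2, rfl⟩ := Submodule.mem_sup.1 hy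
      rw [mul_add]
      exact K.add_mem (hI₀K (hmul a ha y1 hy1)) (hMK (hmul0M a ha y2 hy2))
    have hmul1K : ∀ a ∈ G.deg 1, ∀ y ∈ K, a * y ∈ K := by
      intro a ha y hy
      obtain ⟨y1, hy1, y2, hy2, rfl⟩ := Submodule.mem_sup.1 hy
      rw [mul_add]
      refine K.add_mem (hMK ?_) (hI₀K (hmul1M a ha y2 hy2))
      exact Submodule.subset_span ⟨a, ha, y1, hy1, rfl⟩
    have hdecomp : ∀ c : A, ∃ c0 ∈ G.deg 0, ∃ c1 ∈ G.deg 1, c = c0 + c1 := by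
      intro c
      have hc : c ∈ G.deg 0 ⊔ G.deg 1 := by
        rw [G.isCompl_deg.sup_eq_top]; exact Submodule.mem_top
      obtain ⟨c0, hc0, c1, hc1, h⟩ := Submodule.mem_sup.1 hc
      exact ⟨c0, hc0, c1, hc1, h.symm⟩
    let J : Ideal A :=
      { carrier := K
        add_mem' := fun h h' => K.add_mem h h'
        zero_mem' := K.zero_mem
        smul_mem' := by
          intro c x hx
          obtain ⟨c0, hc0, c1, hc1, rfl⟩ := hdecomp c
          simp only [smul_eq_mul, add_mul]
          exact K.add_mem (hmul0K c0 hc0 x hx) (hmul1K c1 hc1 x hx) }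
    have hJmem : ∀ x : A, x ∈ J ↔ x ∈ K := fun x => Iff.rfl
    -- J is a graded ideal
    have hgraded : G.toGradedAlgebraStruct.IsGradedIdeal J := by
      intro x hx
      obtain ⟨x0, hx0, x1, hx1, rfl⟩ := Submodule.mem_sup.1 ((hJmem x).1 hx)
      exact ⟨x0, hle hx0, x1, hMD1 hx1, (hJmem x0).2 (hI₀K hx0),
        (hJmem x1).2 (hMK hx1), rfl⟩
    -- J is τ-stable
    have hτM : ∀ y ∈ M, G.τ y ∈ M := by
      intro y hy
      induction hy using Submodule.span_induction with
      | mem z hz =>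
        obtain ⟨b, hb, y, hy, rfl⟩ := hz
        rw [map_mul]
        exact Submodule.subset_span ⟨G.τ b, G.τ_deg 1 b hb, G.τ y, (hτ y).1 hy, rfl⟩
      | zero => simp
      | add z w _ _ hz hw => rw [map_add]; exact M.add_mem hz hw
      | smul c z _ hz => rw [map_smul]; exact M.smul_mem c hz
    have hτK : ∀ x ∈ K, G.τ x ∈ K := by
      intro x hx
      obtain ⟨x0, hx0, x1, hx1, rfl⟩ := Submodule.mem_sup.1 hx
      rw [map_add]
      exact K.add_mem (hI₀K ((hτ x0).1 hx0)) (hMK (hτM x1 hx1))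
    have hτJ : ∀ x : A, x ∈ J ↔ G.τ x ∈ J := by
      intro x
      constructor
      · exact fun hx => (hJmem _).2 (hτK x ((hJmem x).1 hx))
      · intro hx
        have := hτK _ ((hJmem _).1 hx)
        rw [G.τ_invol] at this
        exact (hJmem x).2 this
    rcases hsimp J hgraded hτJ with hbot | htop
    · left
      ext x
      simp only [Submodule.mem_bot]
      constructor
      · intro hx
        have : x ∈ J := (hJmem x).2 (hI₀K hx)
        rw [hbot] at this
        simpa using this
      · rintro rfl; exact I₀.zero_mem
    · right
      refine le_antisymm hle ?_
      have h1 : (1:A) ∈ K := (hJmem 1).1 (htop ▸ Submodule.mem_top)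
      obtain ⟨x0, hx0, x1, hx1, hsum⟩ := Submodule.mem_sup.1 h1
      -- uniqueness of decomposition: x0 = 1
      have hkey : (1:A) - x0 ∈ G.deg 0 ⊓ G.deg 1 := by
        constructor
        · exact Submodule.sub_mem _ G.one_mem (hle hx0)
        · have : (1:A) - x0 = x1 := by rw [← hsum]; ring
          rw [this]; exact hMD1 hx1
      rw [G.isCompl_deg.inf_eq_bot] at hkey
      have hx0eq : x0 = 1 := by
        have := Submodule.mem_bot k |>.1 hkey
        have := sub_eq_zero.1 this
        exact this.symm
      have h1I : (1:A) ∈ I₀ := hx0eq ▸ hx0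
      intro a ha
      have := hmul a ha 1 h1I
      simpa using this
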